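/- The category of K-vector spaces has absolute intersections: for any two subspaces B, B' of a vector space A with intersection C = B ∩ B', there exist linear retractions e : A → B (with e restricting to the identity on B) and e' : B' → C (with e' restricting to the identity on C) such that e(x) = e'(x) for all x ∈ B', where we regard e'(x) ∈ C ⊆ B. -/

import Mathlib

theorem stmt10 {K : Type u} [Field K] {A : Type v} [AddCommGroup A] [Module K A]
    (B B' : Submodule K A) :
    ∃ (e : A →ₗ[K] B) (e' : B' →ₗ[K] (B ⊓ B' : Submodule K A)),
      (∀ x : B, e (x : A) = x) ∧
      (∀ (z : A) (hz : z ∈ B ⊓ B'), (e' ⟨z, hz.2⟩ : A) = z) ∧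
      (∀ x : B', (e (x : A) : A) = (e' x : A)) := by
  classical
  -- complement D' of C inside B'
  set C' : Submodule K B' := (B ⊓ B').comap B'.subtype with hC'
  obtain ⟨D', hD'⟩ := C'.exists_isCompl
  set D : Submodule K A := D'.map B'.subtype with hD
  have hDB' : D ≤ B' := by
    rintro x ⟨y, -, rfl⟩; exact y.2
  have hBD : Disjoint B D := by
    rw [disjoint_iff_inf_le]
    rintro x ⟨hxB, y, hyD', rfl⟩
    have hyC' : y ∈ C' := by
      simp only [hC', Submodule.mem_comap]
      exact ⟨hxB, y.2⟩
    have : y ∈ C' ⊓ D' := ⟨hyC', hyD'⟩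
    rw [hD'.inf_eq_bot, Submodule.mem_bot] at this
    simp [this]
  obtain ⟨F, hF⟩ := (B ⊔ D).exists_isCompl
  have hcompl : IsCompl B (D ⊔ F) := hBD.isCompl_sup_right_of_isCompl_sup_left hF
  set e : A →ₗ[K] B := B.linearProjOfIsCompl _ hcompl with he
  -- key: for x ∈ B', e x ∈ B ⊓ B' and e x is the C'-component
  have key : ∀ x : B', ((e x : A) ∈ B ⊓ B') ∧ (e (x : A) : A) =
      ((C'.projectionOnto D' hD' x : B') : A) := by
    intro x
    obtain ⟨c, d, hcd⟩ : ∃ c : C', ∃ d : D', (c : B') + (d : B') = x := by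
      have : x ∈ C' ⊔ D' := by rw [hD'.sup_eq_top]; trivial
      rcases Submodule.mem_sup.1 this with ⟨c, hc, d, hd, h⟩
      exact ⟨⟨c, hc⟩, ⟨d, hd⟩, h⟩
    have hx : (x : A) = ((c : B') : A) + ((d : B') : A) := by
      rw [← hcd]; rfl
    have hcB : ((c : B') : A) ∈ B := c.2.1
    have hdD : ((d : B') : A) ∈ D ⊔ F :=
      Submodule.mem_sup_left ⟨(d : B'), d.2, rfl⟩
    have hex : (e (x : A) : A) = ((c : B') : A) := by
      rw [hx, map_add]
      have h1 : e ((c : B') : A) = ⟨_, hcB⟩ :=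
        Submodule.linearProjOfIsCompl_apply_left hcompl ⟨_, hcB⟩
      have h2 : e ((d : B') : A) = 0 :=
        Submodule.projectionOnto_apply_of_mem_right hcompl hdD
      rw [h1, h2, add_zero]
    have hproj : C'.projectionOnto D' hD' x = c := by
      rw [← hcd, map_add, Submodule.projectionOnto_apply_left,
        Submodule.projectionOnto_apply_right, add_zero]
    constructor
    · rw [hex]; exact ⟨hcB, ((c : B') : B').2⟩
    · rw [hex, hproj]
  set e' : B' →ₗ[K] (B ⊓ B' : Submodule K A) :=
    (B.subtype.comp e).restrict (fun x hx => (key ⟨x, hx⟩).1) with he'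
  refine ⟨e, e', ?_, ?_, ?_⟩
  · intro x; exact Submodule.linearProjOfIsCompl_apply_left hcompl x
  · intro z hz
    have h1 : (e' ⟨z, hz.2⟩ : A) = (e z : A) := rfl
    rw [h1]
    have : e z = ⟨z, hz.1⟩ := Submodule.linearProjOfIsCompl_apply_left hcompl ⟨z, hz.1⟩
    rw [this]
  · intro x
    rfl
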